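/- Let V = k⁵ with basis e₀,…,e₄ and let W range over 2-dimensional subspaces of V (lines ℓ = ℙW in ℙ⁴). For N = [[e₁,e₂],[e₃,e₄]], the set of W such that the subspace k·(e₁,e₂) + k·(e₃,e₄) ⊂ V⊕V meets W⊕W nontrivially equals the set of W spanned by pairs (te₁+se₃, te₂+se₄) for (s:t) ∈ ℙ¹; the corresponding Plücker points (te₁+se₃)∧(te₂+se₄) ∈ ⋀²V trace out a smooth conic in ℙ(⋀²V). -/
import Mathlib


/- STATEMENT 15: In `V = k⁵` with standard basis `e₀,…,e₄` and `N = [[e₁,e₂],[e₃,e₄]]`,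
a 2-dimensional subspace `W ⊂ V` satisfies
`span{(e₁,e₂),(e₃,e₄)} ∩ (W ⊕ W) ≠ 0` iff `W` is spanned by a pair
`(te₁+se₃, te₂+se₄)` for some `(s:t) ∈ ℙ¹`; the corresponding Plücker points
`(te₁+se₃)∧(te₂+se₄)` are nonzero and trace out a smooth conic in `ℙ(⋀²V)`
(the parametrization is projectively injective). -/

open ExteriorAlgebra

/-- The linear functional on the exterior algebra extracting the `eᵢ ∧ eⱼ`
coefficient of a wedge of two vectors. -/
noncomputable def coefFn (k : Type) [Field k] (i j : Fin 5) :
    ExteriorAlgebra k (Fin 5 → k) →ₗ[k] k :=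
  ExteriorAlgebra.liftAlternating (Function.update (fun _ => 0) 2
    (Matrix.detRowAlternating.compLinearMap (LinearMap.funLeft k k ![i, j])))

theorem coefFn_mul {k : Type} [Field k] (i j : Fin 5) (x y : Fin 5 → k) :
    coefFn k i j (ι k x * ι k y) = x i * y j - x j * y i := by
  have h : ι k x * ι k y = ιMulti k 2 ![x, y] := by
    simp [ExteriorAlgebra.ιMulti_apply, List.ofFn_succ]
  rw [h, coefFn, ExteriorAlgebra.liftAlternating_apply_ιMulti, Function.update_self,
    AlternatingMap.compLinearMap_apply]
  show (Matrix.of fun r => (LinearMap.funLeft k k ![i, j]) (![x, y] r)).det = _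
  rw [Matrix.det_fin_two]
  simp [LinearMap.funLeft]

theorem scroll_lines_and_conic
    {k : Type} [Field k] [IsAlgClosed k] [CharZero k] :
    let e : Fin 5 → (Fin 5 → k) := fun i => Pi.basisFun k (Fin 5) i
    (∀ W : Submodule k (Fin 5 → k), Module.finrank k W = 2 →
      ((Submodule.span k {((e 1, e 2) : (Fin 5 → k) × (Fin 5 → k)), (e 3, e 4)} ⊓
          W.prod W ≠ ⊥) ↔
        ∃ s t : k, ¬(s = 0 ∧ t = 0) ∧
          W = Submodule.span k {t • e 1 + s • e 3, t • e 2 + s • e 4})) ∧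
    (∀ s t : k, ¬(s = 0 ∧ t = 0) →
      ι k (t • e 1 + s • e 3) * ι k (t • e 2 + s • e 4) ≠ 0) ∧
    (∀ s t s' t' : k, ¬(s = 0 ∧ t = 0) → ¬(s' = 0 ∧ t' = 0) →
      (∃ c : k, c ≠ 0 ∧
        ι k (t' • e 1 + s' • e 3) * ι k (t' • e 2 + s' • e 4) =
          c • (ι k (t • e 1 + s • e 3) * ι k (t • e 2 + s • e 4))) →
      s' * t = s * t') := by
  intro e
  have hcoord : ∀ i j : Fin 5, e i j = if i = j then 1 else 0 := by
    intro i j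
    show (Pi.basisFun k (Fin 5) i : Fin 5 → k) j = _
    simp [Pi.basisFun_apply, Pi.single_apply, eq_comm]
  -- linear independence of the spanning pair
  have hind : ∀ s t : k, ¬(s = 0 ∧ t = 0) →
      LinearIndependent k ![t • e 1 + s • e 3, t • e 2 + s • e 4] := by
    intro s t hst
    rw [LinearIndependent.pair_iff]
    intro a b hab
    have h1 := congrFun hab 1
    have h2 := congrFun hab 2
    have h3 := congrFun hab 3
    have h4 := congrFun hab 4
    simp [hcoord] at h1 h2 h3 h4
    rcases not_and_or.mp hst with hs | ht
    · exact ⟨h3.resolve_right hs, h4.resolve_right hs⟩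
    · exact ⟨h1.resolve_right ht, h2.resolve_right ht⟩
  have hfr : ∀ s t : k, ¬(s = 0 ∧ t = 0) →
      Module.finrank k (Submodule.span k
        {t • e 1 + s • e 3, t • e 2 + s • e 4} : Submodule k (Fin 5 → k)) = 2 := by
    intro s t hst
    have h := finrank_span_eq_card (hind s t hst)
    rw [Matrix.range_cons_cons_empty] at h
    exact h
  refine ⟨?_, ?_, ?_⟩
  · -- Part 1
    intro W hW
    constructor
    · intro hne
      obtain ⟨p, hp, hp0⟩ := Submodule.exists_mem_ne_zero_of_ne_bot hne
      obtain ⟨hpspan, hpW⟩ := Submodule.mem_inf.mp hp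
      obtain ⟨a, b, hab⟩ := Submodule.mem_span_pair.mp hpspan
      have hx : p.1 = a • e 1 + b • e 3 := by rw [← hab]; rfl
      have hy : p.2 = a • e 2 + b • e 4 := by rw [← hab]; rfl
      have hba : ¬(b = 0 ∧ a = 0) := by
        rintro ⟨hb, ha⟩
        apply hp0
        rw [← hab, ha, hb]
        simp
      refine ⟨b, a, hba, ?_⟩
      have hle : Submodule.span k {a • e 1 + b • e 3, a • e 2 + b • e 4} ≤ W := by
        rw [Submodule.span_le]
        rintro z hz
        rcases hz with rfl | hz
        · rw [← hx]; exact hpW.1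
        · rw [Set.mem_singleton_iff] at hz
          subst hz
          rw [← hy]
          exact hpW.2
      exact (Submodule.eq_of_le_of_finrank_le hle (by rw [hW, hfr b a hba])).symm
    · rintro ⟨s, t, hst, rfl⟩
      refine (Submodule.ne_bot_iff _).mpr
        ⟨(t • e 1 + s • e 3, t • e 2 + s • e 4), Submodule.mem_inf.mpr ⟨?_, ?_⟩, ?_⟩
      · exact Submodule.mem_span_pair.mpr ⟨t, s, rfl⟩
      · exact Submodule.mem_prod.mpr ⟨Submodule.subset_span (by simp),
          Submodule.subset_span (by simp)⟩
      · intro h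
        have h1 := congrFun (congrArg Prod.fst h) 1
        have h3 := congrFun (congrArg Prod.fst h) 3
        simp [hcoord] at h1 h3
        exact hst ⟨h3, h1⟩
  · -- Part 2
    intro s t hst h0
    have h12 := congrArg (coefFn k 1 2) h0
    have h34 := congrArg (coefFn k 3 4) h0
    rw [coefFn_mul, map_zero] at h12 h34
    simp [hcoord] at h12 h34
    exact hst ⟨h34, h12⟩
  · -- Part 3
    rintro s t s' t' hst hst' ⟨c, hc, hEq⟩
    have hA := congrArg (coefFn k 1 2) hEq
    have hB := congrArg (coefFn k 3 4) hEq
    have hC := congrArg (coefFn k 1 4) hEq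
    rw [coefFn_mul, map_smul, coefFn_mul] at hA hB hC
    simp [hcoord, smul_eq_mul] at hA hB hC
    -- hA : t' * t' = c * (t * t), hB : s' * s' = c * (s * s), hC : t' * s' = c * (t * s)
    have key : (s' * t - s * t') * (s' * t + s * t') = 0 := by
      linear_combination t ^ 2 * hB - s ^ 2 * hA
    rcases mul_eq_zero.mp key with h | h
    · linear_combination h
    · have h5 : c * (2 * (s * t ^ 2)) = 0 := by
        linear_combination t' * h - t * hC - s * hA
      have hst2 : s * t ^ 2 = 0 := by
        rcases mul_eq_zero.mp h5 with h' | h'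
        · exact absurd h' hc
        · rcases mul_eq_zero.mp h' with h'' | h''
          · exact absurd h'' two_ne_zero
          · exact h''
      rcases mul_eq_zero.mp hst2 with hs | ht2
      · -- s = 0
        have ht : t ≠ 0 := fun ht => hst ⟨hs, ht⟩
        have ht' : t' ≠ 0 := by
          intro ht'
          apply ht
          have : c * (t * t) = 0 := by rw [← hA, ht']; ring
          rcases mul_eq_zero.mp this with h' | h'
          · exact absurd h' hc
          · rcases mul_eq_zero.mp h' with h'' | h'' <;> exact h''
        have hs' : s' = 0 := by
          have : t' * s' = 0 := by rw [hC, hs]; ring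
          rcases mul_eq_zero.mp this with h' | h'
          · exact absurd h' ht'
          · exact h'
        rw [hs, hs']
        ring
      · -- t = 0
        have ht : t = 0 := pow_eq_zero_iff (n := 2) (by norm_num) |>.mp ht2
        have hs : s ≠ 0 := fun hs => hst ⟨hs, ht⟩
        have hs' : s' ≠ 0 := by
          intro hs'
          apply hs
          have : c * (s * s) = 0 := by rw [← hB, hs']; ring
          rcases mul_eq_zero.mp this with h' | h'
          · exact absurd h' hc
          · rcases mul_eq_zero.mp h' with h'' | h'' <;> exact h''
        have ht' : t' = 0 := by
          have : t' * s' = 0 := by rw [hC, ht]; ring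
          rcases mul_eq_zero.mp this with h' | h'
          · exact h'
          · exact absurd h' hs'
        rw [ht, ht']
        ring
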